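/- Let R be a commutative integral domain and G a torsion-free abelian group. Then the units of the group-ring R[G] are precisely the elements of the form r ε_x where r is a unit of R and x ∈ G. -/

import Mathlib

open Finsupp AddMonoidAlgebra

/-- Core lemma: in a group ring over a group embedding into a linearly ordered group,
a factor of 1 is a single. -/
theorem core_single_of_mul_eq_one
    {R : Type*} [CommRing R] [IsDomain R]
    {H : Type*} [AddCommGroup H]
    {E : Type*} [AddCommGroup E] [LinearOrder E] [IsOrderedAddMonoid E] (D : H →+ E) (hD : Function.Injective D)
    {f g : AddMonoidAlgebra R H} (hfg : f * g = 1) :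
    ∃ (r : R) (x : H), IsUnit r ∧ f = AddMonoidAlgebra.single x r := by
  have hone : (1 : AddMonoidAlgebra R H) ≠ 0 := by
    intro h
    have := congrArg (fun p : AddMonoidAlgebra R H => p.coeff 0) h
    simp [AddMonoidAlgebra.one_def] at this
  have hf : f ≠ 0 := by rintro rfl; rw [zero_mul] at hfg; exact hone hfg.symm
  have hg : g ≠ 0 := by rintro rfl; rw [mul_zero] at hfg; exact hone hfg.symm
  obtain ⟨a, haf, ha⟩ := f.coeff.support.exists_max_image (fun x => D x)
    (Finsupp.support_nonempty_iff.mpr (AddMonoidAlgebra.coeff_eq_zero.not.mpr hf))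
  obtain ⟨a', haf', ha'⟩ := f.coeff.support.exists_min_image (fun x => D x)
    (Finsupp.support_nonempty_iff.mpr (AddMonoidAlgebra.coeff_eq_zero.not.mpr hf))
  obtain ⟨b, hbg, hb⟩ := g.coeff.support.exists_max_image (fun x => D x)
    (Finsupp.support_nonempty_iff.mpr (AddMonoidAlgebra.coeff_eq_zero.not.mpr hg))
  obtain ⟨b', hbg', hb'⟩ := g.coeff.support.exists_min_image (fun x => D x)
    (Finsupp.support_nonempty_iff.mpr (AddMonoidAlgebra.coeff_eq_zero.not.mpr hg))
  have humax : UniqueAdd f.coeff.support g.coeff.support a b := by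
    intro x y hx hy hxy
    have hDx := ha x hx
    have hDy := hb y hy
    have hsum : D x + D y = D a + D b := by rw [← map_add, ← map_add, hxy]
    have h1 : D x = D a := by
      by_contra h
      exact absurd hsum (ne_of_lt (add_lt_add_of_lt_of_le (lt_of_le_of_ne hDx h) hDy))
    have h2 : D y = D b := by
      have := hsum; rw [h1] at this; exact add_left_cancel this
    exact ⟨hD h1, hD h2⟩
  have humin : UniqueAdd f.coeff.support g.coeff.support a' b' := by
    intro x y hx hy hxy
    have hDx := ha' x hx
    have hDy := hb' y hy
    have hsum : D x + D y = D a' + D b' := by rw [← map_add, ← map_add, hxy]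
    have h1 : D x = D a' := by
      by_contra h
      exact absurd hsum (ne_of_gt (add_lt_add_of_lt_of_le (lt_of_le_of_ne hDx (Ne.symm h)) hDy))
    have h2 : D y = D b' := by
      have := hsum; rw [h1] at this; exact add_left_cancel this
    exact ⟨hD h1, hD h2⟩
  have hmax := AddMonoidAlgebra.coeff_mul_add_of_uniqueAdd humax
  have hmin := AddMonoidAlgebra.coeff_mul_add_of_uniqueAdd humin
  rw [hfg] at hmax hmin
  have hfa : f.coeff a ≠ 0 := Finsupp.mem_support_iff.mp haf
  have hgb : g.coeff b ≠ 0 := Finsupp.mem_support_iff.mp hbg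
  have hfa' : f.coeff a' ≠ 0 := Finsupp.mem_support_iff.mp haf'
  have hgb' : g.coeff b' ≠ 0 := Finsupp.mem_support_iff.mp hbg'
  have hab : a + b = 0 := by
    have hne : (1 : AddMonoidAlgebra R H).coeff (a + b) ≠ 0 := by
      rw [hmax]; exact mul_ne_zero hfa hgb
    have hmem := Finsupp.mem_support_iff.mpr hne
    rw [AddMonoidAlgebra.one_def, AddMonoidAlgebra.coeff_single,
      Finsupp.support_single_ne_zero _ (one_ne_zero)] at hmem
    simpa using hmem
  have hab' : a' + b' = 0 := by
    have hne : (1 : AddMonoidAlgebra R H).coeff (a' + b') ≠ 0 := by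
      rw [hmin]; exact mul_ne_zero hfa' hgb'
    have hmem := Finsupp.mem_support_iff.mpr hne
    rw [AddMonoidAlgebra.one_def, AddMonoidAlgebra.coeff_single,
      Finsupp.support_single_ne_zero _ (one_ne_zero)] at hmem
    simpa using hmem
  -- conclude a' = a
  have hDa : D a' = D a := by
    have h1 : D a' + D b' = 0 := by rw [← map_add, hab', map_zero]
    have h2 : D a + D b = 0 := by rw [← map_add, hab, map_zero]
    have hle1 : D a' ≤ D a := ha' a haf
    have hle2 : D b' ≤ D b := hb' b hbg
    have : D a ≤ D a' := by
      rw [eq_neg_of_add_eq_zero_left h2, eq_neg_of_add_eq_zero_left h1]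
      exact neg_le_neg hle2
    exact le_antisymm hle1 this
  have hsupp : f.coeff.support ⊆ {a} := by
    intro x hx
    have h1 : D x ≤ D a := ha x hx
    have h2 : D a ≤ D x := hDa ▸ ha' x hx
    simp [hD (le_antisymm h1 h2)]
  refine ⟨f.coeff a, a, ?_, AddMonoidAlgebra.coeff_inj.mp (Finsupp.support_subset_singleton.mp hsupp)⟩
  apply IsUnit.of_mul_eq_one (g.coeff b)
  rw [← hmax, hab, AddMonoidAlgebra.one_def, AddMonoidAlgebra.coeff_single]
  exact Finsupp.single_eq_same

/-- If `R` is an integral domain and `G` is a torsion-free abelian group, then the units of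
the group-ring `R[G]` are precisely the elements of the form `r ε_x` with `r` a unit of `R`
and `x ∈ G`. -/
theorem isUnit_groupRing_iff_single
    {R : Type*} [CommRing R] [IsDomain R]
    {G : Type*} [AddCommGroup G]
    (hG : ∀ (n : ℕ) (x : G), n ≠ 0 → n • x = 0 → x = 0)
    (f : AddMonoidAlgebra R G) :
    IsUnit f ↔ ∃ (r : R) (x : G), IsUnit r ∧ f = AddMonoidAlgebra.single x r := by
  classical
  constructor
  · intro hu
    obtain ⟨g, hfg⟩ := hu.exists_right_inv
    -- the f.g. subgroup (as a ℤ-submodule) generated by the supports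
    set N : Submodule ℤ G := Submodule.span ℤ ((f.coeff.support ∪ g.coeff.support : Finset G) : Set G) with hN
    have hfs : ∀ x ∈ f.coeff.support, x ∈ N := fun x hx =>
      Submodule.subset_span (by simp [hx])
    have hgs : ∀ x ∈ g.coeff.support, x ∈ N := fun x hx =>
      Submodule.subset_span (by simp [hx])
    haveI : Module.Finite ℤ N :=
      Module.Finite.span_of_finite ℤ (Finset.finite_toSet _)
    haveI : NoZeroSMulDivisors ℤ N := by
      refine ⟨fun {c x} h => ?_⟩
      rcases eq_or_ne c 0 with rfl | hc
      · exact Or.inl rfl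
      · refine Or.inr ?_
        have hcoe : c • (x : G) = 0 := by
          have := congrArg (Subtype.val) h
          simpa using this
        have hnat : (c.natAbs : ℕ) • (x : G) = 0 := by
          rcases Int.natAbs_eq c with he | he
          · have h2 : ((c.natAbs : ℤ)) • (x : G) = 0 := by rw [← he]; exact hcoe
            simpa [natCast_zsmul] using h2
          · have h2 : (-(c.natAbs : ℤ)) • (x : G) = 0 := by rw [← he]; exact hcoe
            rw [neg_zsmul, neg_eq_zero] at h2
            simpa [natCast_zsmul] using h2
        have := hG c.natAbs x (Int.natAbs_ne_zero.mpr hc) hnat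
        exact Subtype.ext this
    haveI : Module.Free ℤ N := Module.free_of_finite_type_torsion_free'
    set ι := Module.Free.ChooseBasisIndex ℤ N
    letI : LinearOrder ι := IsWellOrder.linearOrder WellOrderingRel
    let b : Module.Basis ι ℤ N := Module.Free.chooseBasis ℤ N
    let D : N →+ Lex (ι →₀ ℤ) :=
      { toFun := fun x => toLex (b.repr x)
        map_zero' := by simp
        map_add' := fun x y => by simp }
    have hD : Function.Injective D := fun x y hxy => by
      have : b.repr x = b.repr y := by
        simpa [D] using hxy
      exact b.repr.injective this
    -- lift f and g to R[N]
    let φ : AddMonoidAlgebra R N →+* AddMonoidAlgebra R G :=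
      AddMonoidAlgebra.mapDomainRingHom R (N.subtype.toAddMonoidHom)
    have hinj : Function.Injective (Subtype.val : N → G) := Subtype.val_injective
    have hφinj : Function.Injective φ := AddMonoidAlgebra.mapDomain_injective hinj
    have lift : ∀ (p : AddMonoidAlgebra R G), (∀ x ∈ p.coeff.support, x ∈ N) →
        ∃ p' : AddMonoidAlgebra R N, φ p' = p := by
      intro p hp
      refine ⟨AddMonoidAlgebra.comapDomain (Subtype.val : N → G) hinj p, ?_⟩
      exact AddMonoidAlgebra.mapDomain_comapDomain (fun x hx => ⟨⟨x, hp x hx⟩, rfl⟩) hinj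
    obtain ⟨f', hf'⟩ := lift f hfs
    obtain ⟨g', hg'⟩ := lift g hgs
    have hfg' : f' * g' = 1 := by
      apply hφinj
      rw [map_mul, hf', hg', map_one, hfg]
    obtain ⟨r, x, hr, hfx⟩ := core_single_of_mul_eq_one D hD hfg'
    refine ⟨r, (x : G), hr, ?_⟩
    rw [← hf', hfx]
    show AddMonoidAlgebra.mapDomain _ _ = _
    rw [AddMonoidAlgebra.mapDomain_single]
    rfl
  · rintro ⟨r, x, hr, rfl⟩
    obtain ⟨u, rfl⟩ := hr
    refine IsUnit.of_mul_eq_one (AddMonoidAlgebra.single (-x) (↑u⁻¹)) ?_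
    rw [AddMonoidAlgebra.single_mul_single, add_neg_cancel, u.mul_inv,
      AddMonoidAlgebra.one_def]
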